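/- Let φ : 2^V → ℤ be a nonnegative integer-valued submodular function and J ⊆ V a nonempty subset. Then φ + ξ_J ≥ 0 (pointwise) if and only if there exists v ∈ J such that φ + ξ_v ≥ 0, where ξ_S(I) = -1 if S ⊆ I and 0 otherwise, and ξ_v := ξ_{{v}}. -/
import Mathlib


open Finset

/-- The function `ξ_S : 2^V → ℤ`, equal to `-1` on supersets of `S` and `0` elsewhere. -/
def xiJ {V : Type*} [DecidableEq V] (S I : Finset V) : ℤ :=
  if S ⊆ I then -1 else 0

/-- Zero sets of a nonnegative submodular function are closed under union, covering `J`. -/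
lemma zero_union {V : Type*} [DecidableEq V]
    (φ : Finset V → ℤ)
    (h0 : φ ∅ = 0)
    (hsub : ∀ I₁ I₂ : Finset V, φ (I₁ ∪ I₂) + φ (I₁ ∩ I₂) ≤ φ I₁ + φ I₂)
    (hnn : ∀ I : Finset V, 0 ≤ φ I)
    (J : Finset V) (h : ∀ v ∈ J, ∃ I : Finset V, v ∈ I ∧ φ I = 0) :
    ∃ I : Finset V, J ⊆ I ∧ φ I = 0 := by
  induction J using Finset.induction with
  | empty => exact ⟨∅, Finset.Subset.refl _, h0⟩
  | @insert a J _ ih =>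
    obtain ⟨I₁, haI₁, hI₁⟩ := h _ (Finset.mem_insert_self _ _)
    obtain ⟨I₂, hJI₂, hI₂⟩ := ih (fun v hv => h v (Finset.mem_insert_of_mem hv))
    refine ⟨I₁ ∪ I₂, ?_, le_antisymm ?_ (hnn _)⟩
    · intro x hx
      rcases Finset.mem_insert.mp hx with rfl | hx
      · exact Finset.mem_union_left _ haI₁
      · exact Finset.mem_union_right _ (hJI₂ hx)
    · have := hsub I₁ I₂
      have := hnn (I₁ ∩ I₂)
      omega

/-- For a nonnegative integer-valued submodular `φ` and a nonempty `J ⊆ V`: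
`φ + ξ_J ≥ 0` pointwise iff there is `v ∈ J` with `φ + ξ_{{v}} ≥ 0` pointwise. -/
theorem phi_add_xiJ_nonneg_iff
    {V : Type*} [Fintype V] [DecidableEq V]
    (φ : Finset V → ℤ)
    (h0 : φ ∅ = 0)
    (hsub : ∀ I₁ I₂ : Finset V, φ (I₁ ∪ I₂) + φ (I₁ ∩ I₂) ≤ φ I₁ + φ I₂)
    (hnn : ∀ I : Finset V, 0 ≤ φ I)
    (J : Finset V) (hJ : J.Nonempty) :
    (∀ I : Finset V, 0 ≤ φ I + xiJ J I) ↔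
      ∃ v ∈ J, ∀ I : Finset V, 0 ≤ φ I + xiJ {v} I := by
  constructor
  · intro h
    by_contra hc
    push_neg at hc
    have hz : ∀ v ∈ J, ∃ I : Finset V, v ∈ I ∧ φ I = 0 := by
      intro v hv
      obtain ⟨I, hI⟩ := hc v hv
      refine ⟨I, ?_, ?_⟩
      · by_contra hvI
        simp [xiJ, Finset.singleton_subset_iff, hvI] at hI
        exact absurd (hnn I) (not_le.mpr hI)
      · have hsub' : ({v} : Finset V) ⊆ I := by
          rw [Finset.singleton_subset_iff]
          by_contra hvI
          simp [xiJ, Finset.singleton_subset_iff, hvI] at hI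
          exact absurd (hnn I) (not_le.mpr hI)
        simp only [xiJ, if_pos hsub'] at hI
        have := hnn I
        omega
    obtain ⟨I, hJI, hI0⟩ := zero_union φ h0 hsub hnn J hz
    have := h I
    simp only [xiJ, if_pos hJI, hI0] at this
    omega
  · rintro ⟨v, hvJ, hv⟩ I
    have := hv I
    simp only [xiJ] at this ⊢
    split_ifs with hJI
    · have : ({v} : Finset V) ⊆ I := Finset.singleton_subset_iff.mpr (hJI hvJ)
      simpa [xiJ, this] using hv I
    · simpa using hnn I
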